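/- arXiv:1012.5057 — 4 statements merged into one kernel-verified Lean document; each statement's English description precedes it below -/
import Mathlib

section
/- Under these hypotheses one has the identity (a_1 a_2 − p_{12} a_2 a_1)·(b_2 b_1 − p_{12}^{−1} b_1 b_2) − p_{11} p_{12} p_{21} p_{22} · (b_2 b_1 − p_{12}^{−1} b_1 b_2)·(a_1 a_2 − p_{12} a_2 a_1) = (1 − p_{12} p_{21})·(1 − h_1 h_2). (This is the identity [[x_1,x_2],[x_2^−,x_1^−]] = (1 − p_{12}p_{21})(1 − g_1 g_2 f_1 f_2) of Lemma 2.3 in the algebra 𝔉_n.) -/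
/-- Lemma 2.3 of the paper, abstracted.
Under the hypotheses on `a_1, a_2, b_1, b_2, h_1, h_2` one has
`[[x_1,x_2],[x_2⁻,x_1⁻]] = (1 − p_{12}p_{21})(1 − g_1g_2f_1f_2)`, i.e.
`(a_1a_2 − p_{12}a_2a_1)(b_2b_1 − p_{12}⁻¹ b_1b_2)
  − p_{11}p_{12}p_{21}p_{22}·(b_2b_1 − p_{12}⁻¹ b_1b_2)(a_1a_2 − p_{12}a_2a_1)
  = (1 − p_{12}p_{21})·(1 − h_1h_2)`. -/
theorem stmt1
    (𝕜 : Type) [Field 𝕜] (p11 p12 p21 p22 : 𝕜)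
    (hp11 : p11 ≠ 0) (hp12 : p12 ≠ 0) (hp21 : p21 ≠ 0) (hp22 : p22 ≠ 0)
    (A : Type) [Ring A] [Algebra 𝕜 A]
    (a1 a2 b1 b2 h1 h2 : A)
    (r11 : a1 * b1 - p11 • (b1 * a1) = 1 - h1)
    (r12 : a1 * b2 - p21 • (b2 * a1) = 0)
    (r21 : a2 * b1 - p12 • (b1 * a2) = 0)
    (r22 : a2 * b2 - p22 • (b2 * a2) = 1 - h2)
    (h1a1 : h1 * a1 = (p11 * p11)⁻¹ • (a1 * h1))
    (h1a2 : h1 * a2 = (p12 * p21)⁻¹ • (a2 * h1))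
    (h2a1 : h2 * a1 = (p21 * p12)⁻¹ • (a1 * h2))
    (h2a2 : h2 * a2 = (p22 * p22)⁻¹ • (a2 * h2))
    (h1b1 : h1 * b1 = (p11 * p11) • (b1 * h1))
    (h1b2 : h1 * b2 = (p12 * p21) • (b2 * h1))
    (h2b1 : h2 * b1 = (p21 * p12) • (b1 * h2))
    (h2b2 : h2 * b2 = (p22 * p22) • (b2 * h2))
    (hcomm : h1 * h2 = h2 * h1) :
    (a1 * a2 - p12 • (a2 * a1)) * (b2 * b1 - p12⁻¹ • (b1 * b2))
      - (p11 * p12 * p21 * p22) •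
        ((b2 * b1 - p12⁻¹ • (b1 * b2)) * (a1 * a2 - p12 • (a2 * a1)))
    = (1 - p12 * p21) • ((1 : A) - h1 * h2) := by
  -- generic step: turn a pair-commutation rule into a rule with a trailing factor
  have swap : ∀ (x y : A) (c : 𝕜), x * y = c • (y * x) →
      ∀ t : A, x * (y * t) = c • (y * (x * t)) := by
    intro x y c h t
    rw [← mul_assoc, h, smul_mul_assoc, mul_assoc]
  -- pair-form commutation rules
  have pc11 : a1 * b1 = (1 - h1) + p11 • (b1 * a1) := sub_eq_iff_eq_add.mp r11
  have pc12 : a1 * b2 = p21 • (b2 * a1) := sub_eq_zero.mp r12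
  have pc21 : a2 * b1 = p12 • (b1 * a2) := sub_eq_zero.mp r21
  have pc22 : a2 * b2 = (1 - h2) + p22 • (b2 * a2) := sub_eq_iff_eq_add.mp r22
  have ph11 : a1 * h1 = (p11 * p11) • (h1 * a1) := by
    rw [h1a1, smul_smul, mul_inv_cancel₀ (mul_ne_zero hp11 hp11), one_smul]
  have ph21 : a2 * h1 = (p12 * p21) • (h1 * a2) := by
    rw [h1a2, smul_smul, mul_inv_cancel₀ (mul_ne_zero hp12 hp21), one_smul]
  have ph12 : a1 * h2 = (p21 * p12) • (h2 * a1) := by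
    rw [h2a1, smul_smul, mul_inv_cancel₀ (mul_ne_zero hp21 hp12), one_smul]
  have ph22 : a2 * h2 = (p22 * p22) • (h2 * a2) := by
    rw [h2a2, smul_smul, mul_inv_cancel₀ (mul_ne_zero hp22 hp22), one_smul]
  have hcomm' : h2 * h1 = h1 * h2 := hcomm.symm
  -- trailing-factor forms
  have L11 : ∀ t : A, a1 * (b1 * t) = p11 • (b1 * (a1 * t)) + (t - h1 * t) := by
    intro t
    rw [← mul_assoc, pc11, add_mul, smul_mul_assoc, mul_assoc, sub_mul, one_mul, add_comm]
  have L22 : ∀ t : A, a2 * (b2 * t) = p22 • (b2 * (a2 * t)) + (t - h2 * t) := by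
    intro t
    rw [← mul_assoc, pc22, add_mul, smul_mul_assoc, mul_assoc, sub_mul, one_mul, add_comm]
  have L12 := swap _ _ _ pc12
  have L21 := swap _ _ _ pc21
  have K11 := swap _ _ _ ph11
  have K21 := swap _ _ _ ph21
  have K12 := swap _ _ _ ph12
  have K22 := swap _ _ _ ph22
  have H11 := swap _ _ _ h1b1
  have H12 := swap _ _ _ h1b2
  have H21 := swap _ _ _ h2b1
  have H22 := swap _ _ _ h2b2
  have HC : ∀ t : A, h2 * (h1 * t) = h1 * (h2 * t) := by
    intro t; rw [← mul_assoc, hcomm', mul_assoc]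
  simp only [mul_add, add_mul, mul_sub, sub_mul, smul_add, smul_sub, smul_smul,
    mul_smul_comm, smul_mul_assoc, mul_assoc, mul_one, one_mul,
    L11, L12, L21, L22, pc11, pc12, pc21, pc22,
    K11, K12, K21, K22, ph11, ph12, ph21, ph22,
    H11, H12, H21, H22, h1b1, h1b2, h2b1, h2b2, HC, hcomm']
  match_scalars <;> field_simp <;> ring
end

section
/- Let 1 ≤ k ≤ n < m ≤ 2n and let S ⊆ [k,m). Then S is white (k,m)-regular if and only if the set ψ(S)−1 := {ψ(s)−1 : s ∈ S} is white (ψ(m),ψ(k))-regular, and S is black (k,m)-regular if and only if ψ(S)−1 is black (ψ(m),ψ(k))-regular. -/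
namespace Kh

/-- `ψ(a) = 2n − a + 1`. -/
def psi (n a : ℕ) : ℕ := 2 * n - a + 1

/-- White `(k,m)`-regularity of a set `S`: if `k ≤ n < m` then for every `i` with
`k−1 ≤ i < m` and `k ≤ ψ(i) ≤ m+1`, at least one of `i`, `ψ(i)−1` does not belong to
`S ∪ {k−1, m}`; if `m ≤ n` or `k > n` the condition is vacuous. -/
def whiteReg (n : ℕ) (S : Set ℕ) (k m : ℕ) : Prop :=
  k ≤ n → n < m →
    ∀ i, k - 1 ≤ i → i < m → k ≤ psi n i → psi n i ≤ m + 1 →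
      i ∉ S ∪ {k - 1, m} ∨ psi n i - 1 ∉ S ∪ {k - 1, m}

/-- Black `(k,m)`-regularity of a set `S`: if `k ≤ n < m` then for every `i` with
`k ≤ i ≤ m` and `k ≤ ψ(i) ≤ m+1`, at least one of `i`, `ψ(i)−1` belongs to
`S ∖ {k−1, m}`; if `m ≤ n` or `k > n` the condition is vacuous. -/
def blackReg (n : ℕ) (S : Set ℕ) (k m : ℕ) : Prop :=
  k ≤ n → n < m →
    ∀ i, k ≤ i → i ≤ m → k ≤ psi n i → psi n i ≤ m + 1 →
      i ∈ S \ {k - 1, m} ∨ psi n i - 1 ∈ S \ {k - 1, m}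

/-- `(k,m)`-regularity: white or black `(k,m)`-regular. -/
def isReg (n : ℕ) (S : Set ℕ) (k m : ℕ) : Prop :=
  whiteReg n S k m ∨ blackReg n S k m

/-- `a` is a white label of the scheme of `(S,k,m)`. -/
def whiteLabel (S : Set ℕ) (k m a : ℕ) : Prop :=
  a = k - 1 ∨ (k ≤ a ∧ a < m ∧ a ∉ S)

/-- `a` is a black label of the scheme of `(S,k,m)`. -/
def blackLabel (S : Set ℕ) (k m a : ℕ) : Prop :=
  a = m ∨ (k ≤ a ∧ a < m ∧ a ∈ S)

/-- The superposed scheme of `(S,k,m)` and `(T,i,j)` is balanced: there are no labels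
`t < s` with `t` white on both schemes and `s` black on both schemes. -/
def balanced (S : Set ℕ) (k m : ℕ) (T : Set ℕ) (i j : ℕ) : Prop :=
  ¬ ∃ t s, t < s ∧ whiteLabel S k m t ∧ whiteLabel T i j t ∧
    blackLabel S k m s ∧ blackLabel T i j s

/-- The pair `(S,k,m)`, `(T,i,j)` has form (★): `k = i`, `m = j`, and every
intermediate label belongs to exactly one of `S`, `T`. -/
def formStar (S : Set ℕ) (k m : ℕ) (T : Set ℕ) (i j : ℕ) : Prop :=
  k = i ∧ m = j ∧ ∀ a, k ≤ a → a < m → Xor' (a ∈ S) (a ∈ T)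

/-- The dual set `S* = [ψ(m),ψ(k)) ∖ {ψ(s)−1 : s ∈ S}`. -/
def starSet (n : ℕ) (S : Set ℕ) (k m : ℕ) : Set ℕ :=
  Set.Ico (psi n m) (psi n k) \ ((fun s => psi n s - 1) '' S)

/-- The superposed scheme of `(S,k,m)` and `(T,i,j)` is strongly white: no label is
black on both schemes, `k ≠ i`, and whenever `[max(k,i)−1, min(m,j)]` contains at
least two labels, the label `max(k,i)−1` is white on both schemes. -/
def stronglyWhite (S : Set ℕ) (k m : ℕ) (T : Set ℕ) (i j : ℕ) : Prop :=
  (¬ ∃ a, blackLabel S k m a ∧ blackLabel T i j a) ∧ k ≠ i ∧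
    (max k i - 1 < min m j →
      whiteLabel S k m (max k i - 1) ∧ whiteLabel T i j (max k i - 1))

/-- The superposed scheme of `(S,k,m)` and `(T,i,j)` is strongly black: no label is
white on both schemes, `m ≠ j`, and whenever `[max(k,i)−1, min(m,j)]` contains at
least two labels, the label `min(m,j)` is black on both schemes. -/
def stronglyBlack (S : Set ℕ) (k m : ℕ) (T : Set ℕ) (i j : ℕ) : Prop :=
  (¬ ∃ a, whiteLabel S k m a ∧ whiteLabel T i j a) ∧ m ≠ j ∧
    (max k i - 1 < min m j →
      blackLabel S k m (min m j) ∧ blackLabel T i j (min m j))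

/-- The superposed scheme is strong: strongly white or strongly black. -/
def strong (S : Set ℕ) (k m : ℕ) (T : Set ℕ) (i j : ℕ) : Prop :=
  stronglyWhite S k m T i j ∨ stronglyBlack S k m T i j

lemma mem_image_iff (n k m : ℕ) (hm : m ≤ 2 * n) (S : Set ℕ) (hS : S ⊆ Set.Ico k m)
    (a : ℕ) (ha : a ≤ 2 * n) :
    a ∈ ((fun s => psi n s - 1) '' S) ↔ 2 * n - a ∈ S := by
  constructor
  · rintro ⟨s, hs, rfl⟩
    obtain ⟨h1, h2⟩ := hS hs
    have he : 2 * n - ((fun s => psi n s - 1) s) = s := by simp only [psi]; omega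
    rw [he]; exact hs
  · intro h
    refine ⟨2 * n - a, h, ?_⟩
    obtain ⟨h1, h2⟩ := hS h
    simp only [psi]; omega

lemma image_image (n k m : ℕ) (hm : m ≤ 2 * n) (S : Set ℕ) (hS : S ⊆ Set.Ico k m) :
    (fun s => psi n s - 1) '' ((fun s => psi n s - 1) '' S) = S := by
  ext a
  simp only [Set.mem_image]
  constructor
  · rintro ⟨b, ⟨s, hs, rfl⟩, rfl⟩
    obtain ⟨h1, h2⟩ := hS hs
    have he : psi n (psi n s - 1) - 1 = s := by
      simp only [psi]; omega
    rw [he]; exact hs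
  · intro ha
    obtain ⟨h1, h2⟩ := hS ha
    exact ⟨psi n a - 1, ⟨a, ha, rfl⟩, by simp only [psi]; omega⟩

lemma image_sub (n k m : ℕ) (hk : 1 ≤ k) (hm : m ≤ 2 * n) (S : Set ℕ)
    (hS : S ⊆ Set.Ico k m) :
    ((fun s => psi n s - 1) '' S) ⊆ Set.Ico (psi n m) (psi n k) := by
  rintro _ ⟨s, hs, rfl⟩
  obtain ⟨h1, h2⟩ := hS hs
  simp only [Set.mem_Ico, psi]; omega

lemma whiteFlip (n k m : ℕ) (hk : 1 ≤ k) (hkn : k ≤ n) (hnm : n < m) (hm : m ≤ 2 * n)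
    (S : Set ℕ) (hS : S ⊆ Set.Ico k m) (W : whiteReg n S k m) :
    whiteReg n ((fun s => psi n s - 1) '' S) (psi n m) (psi n k) := by
  intro _ _ j hj1 hj2 hj3 hj4
  simp only [psi] at hj1 hj2 hj3 hj4
  have hj2n : j ≤ 2 * n := by omega
  have hpj : psi n j - 1 = 2 * n - j := by simp only [psi]; omega
  have memO : ∀ a, a ∈ S ∪ ({k - 1, m} : Set ℕ) ↔ (a ∈ S ∨ a = k - 1 ∨ a = m) := by
    intro a
    simp only [Set.mem_union, Set.mem_insert_iff, Set.mem_singleton_iff]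
  have memU : ∀ a, a ≤ 2 * n →
      (a ∈ ((fun s => psi n s - 1) '' S) ∪ ({psi n m - 1, psi n k} : Set ℕ) ↔
        (2 * n - a ∈ S ∨ a = 2 * n - m ∨ a = 2 * n - k + 1)) := by
    intro a ha
    rw [Set.mem_union, mem_image_iff n k m hm S hS a ha, Set.mem_insert_iff,
      Set.mem_singleton_iff]
    have h1 : a = psi n m - 1 ↔ a = 2 * n - m := by simp only [psi]; omega
    have h2 : a = psi n k ↔ a = 2 * n - k + 1 := by simp only [psi]
    rw [h1, h2]
  have hee : 2 * n - (2 * n - j) = j := by omega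
  rw [hpj, memU j hj2n, memU (2 * n - j) (by omega), hee]
  rcases Nat.lt_or_ge (2 * n - m) j with hcase | hcase
  · have hw := W hkn hnm (2 * n - j) (by omega) (by omega)
      (by simp only [psi]; omega) (by simp only [psi]; omega)
    have hpi : psi n (2 * n - j) - 1 = j := by simp only [psi]; omega
    rw [hpi, memO, memO] at hw
    rcases hw with h | h
    · push_neg at h
      obtain ⟨h1, h2, h3⟩ := h
      left
      rintro (hx | hx | hx)
      · exact h1 hx
      · omega
      · omega
    · push_neg at h
      obtain ⟨h1, h2, h3⟩ := h
      right
      rintro (hx | hx | hx)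
      · exact h1 hx
      · omega
      · omega
  · have hje : j = 2 * n - m := by omega
    have hw := W hkn hnm j (by omega) (by omega)
      (by simp only [psi]; omega) (by simp only [psi]; omega)
    have hpi : psi n j - 1 = 2 * n - j := by simp only [psi]; omega
    rw [hpi, memO, memO] at hw
    rcases hw with h | h
    · push_neg at h
      obtain ⟨h1, h2, h3⟩ := h
      right
      rintro (hx | hx | hx)
      · exact h1 hx
      · omega
      · omega
    · exfalso
      exact h (Or.inr (Or.inr (by omega)))

lemma blackFlip (n k m : ℕ) (hk : 1 ≤ k) (hkn : k ≤ n) (hnm : n < m) (hm : m ≤ 2 * n)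
    (S : Set ℕ) (hS : S ⊆ Set.Ico k m) (B : blackReg n S k m) :
    blackReg n ((fun s => psi n s - 1) '' S) (psi n m) (psi n k) := by
  intro _ _ j hj1 hj2 hj3 hj4
  simp only [psi] at hj1 hj2 hj3 hj4
  have hj2n : j ≤ 2 * n := by omega
  have hpj : psi n j - 1 = 2 * n - j := by simp only [psi]; omega
  have memO : ∀ a, a ∈ S \ ({k - 1, m} : Set ℕ) ↔ (a ∈ S ∧ a ≠ k - 1 ∧ a ≠ m) := by
    intro a
    simp only [Set.mem_diff, Set.mem_insert_iff, Set.mem_singleton_iff, not_or]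
  have memD : ∀ a, a ≤ 2 * n →
      (a ∈ ((fun s => psi n s - 1) '' S) \ ({psi n m - 1, psi n k} : Set ℕ) ↔
        (2 * n - a ∈ S ∧ a ≠ 2 * n - m ∧ a ≠ 2 * n - k + 1)) := by
    intro a ha
    rw [Set.mem_diff, mem_image_iff n k m hm S hS a ha]
    simp only [Set.mem_insert_iff, Set.mem_singleton_iff, not_or]
    have h1 : ¬a = psi n m - 1 ↔ a ≠ 2 * n - m := by simp only [psi]; omega
    have h2 : ¬a = psi n k ↔ a ≠ 2 * n - k + 1 := by simp only [psi]
    rw [h1, h2]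
  have hee : 2 * n - (2 * n - j) = j := by omega
  rw [hpj, memD j hj2n, memD (2 * n - j) (by omega), hee]
  rcases Nat.lt_or_ge (2 * n - k) j with hcase | hcase
  · have hje : j = 2 * n - k + 1 := by omega
    have hw := B hkn hnm j (by omega) (by omega)
      (by simp only [psi]; omega) (by simp only [psi]; omega)
    have hpi : psi n j - 1 = 2 * n - j := by simp only [psi]; omega
    rw [hpi, memO, memO] at hw
    rcases hw with h | h
    · obtain ⟨h1, h2, h3⟩ := h
      right
      exact ⟨h1, by omega, by omega⟩
    · exact absurd h.2.1 (by omega)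
  · have hw := B hkn hnm (2 * n - j) (by omega) (by omega)
      (by simp only [psi]; omega) (by simp only [psi]; omega)
    have hpi : psi n (2 * n - j) - 1 = j := by simp only [psi]; omega
    rw [hpi, memO, memO] at hw
    rcases hw with h | h
    · obtain ⟨h1, h2, h3⟩ := h
      left
      exact ⟨h1, by omega, by omega⟩
    · obtain ⟨h1, h2, h3⟩ := h
      right
      exact ⟨h1, by omega, by omega⟩

/-- Lemma `dop1`. For `1 ≤ k ≤ n < m ≤ 2n` and `S ⊆ [k,m)`:
`S` is white (black) `(k,m)`-regular iff `ψ(S)−1 = {ψ(s)−1 : s ∈ S}` is white (black)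
`(ψ(m),ψ(k))`-regular. -/
theorem stmt9 (n k m : ℕ) (hn : 1 ≤ n) (hk : 1 ≤ k) (hkn : k ≤ n) (hnm : n < m)
    (hm : m ≤ 2 * n) (S : Set ℕ) (hS : S ⊆ Set.Ico k m) :
    (whiteReg n S k m ↔
      whiteReg n ((fun s => psi n s - 1) '' S) (psi n m) (psi n k)) ∧
    (blackReg n S k m ↔
      blackReg n ((fun s => psi n s - 1) '' S) (psi n m) (psi n k)) := by
  have hk' : 1 ≤ psi n m := by simp only [psi]; omega
  have hkn' : psi n m ≤ n := by simp only [psi]; omega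
  have hnm' : n < psi n k := by simp only [psi]; omega
  have hm' : psi n k ≤ 2 * n := by simp only [psi]; omega
  have hS' : ((fun s => psi n s - 1) '' S) ⊆ Set.Ico (psi n m) (psi n k) :=
    image_sub n k m hk hm S hS
  have hpk : psi n (psi n k) = k := by simp only [psi]; omega
  have hpm : psi n (psi n m) = m := by simp only [psi]; omega
  constructor
  · constructor
    · exact whiteFlip n k m hk hkn hnm hm S hS
    · intro h
      have h2 := whiteFlip n (psi n m) (psi n k) hk' hkn' hnm' hm'
        ((fun s => psi n s - 1) '' S) hS' h
      rwa [image_image n k m hm S hS, hpk, hpm] at h2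
  · constructor
    · exact blackFlip n k m hk hkn hnm hm S hS
    · intro h
      have h2 := blackFlip n (psi n m) (psi n k) hk' hkn' hnm' hm'
        ((fun s => psi n s - 1) '' S) hS' h
      rwa [image_image n k m hm S hS, hpk, hpm] at h2

end Kh
end

section
/- Let 1 ≤ k ≤ m ≤ 2n, let S be a white (k,m)-regular set of integers, let s be a black label of the scheme of (S,k,m) (that is, s = m, or k ≤ s < m and s ∈ S), and let t be an integer with k−1 ≤ t < s. Then S is white (1+t,s)-regular if and only if either ψ(t)−1 is a white label of the scheme of (S,k,m) (that is, ψ(t)−1 = k−1, or k ≤ ψ(t)−1 < m and ψ(t)−1 ∉ S) or ψ(t)−1 ∉ [t,s]. In particular, if t is a black label of the scheme or t = k−1, then S is white (1+t,s)-regular. -/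
namespace Kh

/-- Lemma `si`. Let `S` be a white `(k,m)`-regular set, `s` a black
label of the scheme of `(S,k,m)` and `k−1 ≤ t < s`. Then `S` is white `(1+t,s)`-regular
iff either `ψ(t)−1` is a white label of the scheme or `ψ(t)−1 ∉ [t,s]`. In particular,
if `t` is a black label or `t = k−1`, then `S` is white `(1+t,s)`-regular. -/
theorem stmt10 (n k m : ℕ) (hn : 1 ≤ n) (hk : 1 ≤ k) (hkm : k ≤ m) (hm : m ≤ 2 * n)
    (S : Set ℕ) (hreg : whiteReg n S k m) (s t : ℕ)
    (hs : blackLabel S k m s) (ht1 : k - 1 ≤ t) (hts : t < s) :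
    (whiteReg n S (1 + t) s ↔
      (whiteLabel S k m (psi n t - 1) ∨ psi n t - 1 ∉ Set.Icc t s)) ∧
    ((blackLabel S k m t ∨ t = k - 1) → whiteReg n S (1 + t) s) := by
  have hsm : s ≤ m := by rcases hs with h | ⟨_, h, _⟩ <;> omega
  have hsS : s = m ∨ s ∈ S := by
    rcases hs with h | ⟨_, _, h⟩
    · exact Or.inl h
    · exact Or.inr h
  have hpsit : psi n t - 1 = 2 * n - t := by unfold psi; omega
  -- helper: vacuous region
  have hvac : 2 * n - t ∈ Set.Icc t s → ¬(1 + t ≤ n ∧ n < s) →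
      whiteLabel S k m (2 * n - t) := by
    intro hin hnd
    simp only [Set.mem_Icc] at hin
    rcases Nat.lt_or_ge n s with h2 | h2
    · have htn : t = n := by omega
      have h2nt : 2 * n - t = n := by omega
      rw [h2nt]
      rcases Nat.lt_or_ge n k with hnk | hnk
      · left; omega
      · have := hreg hnk (by omega) n (by omega) (by omega)
          (by unfold psi; omega) (by unfold psi; omega)
        have hpn : psi n n - 1 = n := by unfold psi; omega
        rw [hpn] at this
        simp only [Set.mem_union, Set.mem_insert_iff, Set.mem_singleton_iff,
          not_or] at this
        rcases this with ⟨hS, _, _⟩ | ⟨hS, _, _⟩ <;>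
          exact Or.inr ⟨by omega, by omega, hS⟩
    · exfalso; omega
  -- helper: deep region with t black or t = k-1
  have hdeep : 1 + t ≤ n → n < s → 2 * n - t ≤ s → (t ∈ S ∨ t = k - 1) →
      whiteLabel S k m (2 * n - t) := by
    intro h1 h2 hus htB
    have := hreg (by omega) (by omega) t ht1 (by omega)
      (by unfold psi; omega) (by unfold psi; omega)
    rw [hpsit] at this
    simp only [Set.mem_union, Set.mem_insert_iff, Set.mem_singleton_iff,
      not_or] at this
    rcases this with ⟨hS, hk1, _⟩ | ⟨hS, _, hmm⟩
    · rcases htB with h | h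
      · exact absurd h hS
      · exact absurd h hk1
    · exact Or.inr ⟨by omega, by omega, hS⟩
  have hiff : whiteReg n S (1 + t) s ↔
      (whiteLabel S k m (psi n t - 1) ∨ psi n t - 1 ∉ Set.Icc t s) := by
    rw [hpsit]
    constructor
    · intro hw
      by_cases hin : 2 * n - t ∈ Set.Icc t s
      · left
        by_cases hds : 1 + t ≤ n ∧ n < s
        · have hin' := hin
          simp only [Set.mem_Icc] at hin'
          have := hw (by omega) (by omega) t (by omega) hts
            (by unfold psi; omega) (by unfold psi; omega)
          rw [hpsit] at this
          simp only [Set.mem_union, Set.mem_insert_iff, Set.mem_singleton_iff,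
            not_or] at this
          rcases this with ⟨_, hteq, _⟩ | ⟨hS, _, hss⟩
          · omega
          · exact Or.inr ⟨by omega, by omega, hS⟩
        · exact hvac hin hds
      · exact Or.inr hin
    · intro hrhs h1 h2 i hi1 hi2 hi3 hi4
      have hki : k ≤ n := by omega
      have hnm : n < m := by omega
      have hi2n : i ≤ 2 * n := by omega
      have hpsii : psi n i - 1 = 2 * n - i := by unfold psi; omega
      by_cases hit : i = t
      · right
        subst hit
        have huic : 2 * n - i ∈ Set.Icc i s := by
          simp only [Set.mem_Icc]
          unfold psi at hi4
          constructor <;> omega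
        rcases hrhs with hwl | hni
        · rcases hwl with h | ⟨hks, hsm', hnS⟩
          · omega
          · rw [hpsii]
            simp only [Set.mem_union, Set.mem_insert_iff, Set.mem_singleton_iff,
              not_or]
            refine ⟨hnS, by omega, fun hes => ?_⟩
            rcases hsS with h' | h'
            · omega
            · exact hnS (by rw [hes]; exact h')
        · exact absurd huic hni
      · by_cases hiu : i = 2 * n - t
        · left
          have huic : i ∈ Set.Icc t s := by simp only [Set.mem_Icc]; omega
          rw [← hiu] at hrhs
          rcases hrhs with hwl | hni
          · rcases hwl with h | ⟨hks, hsm', hnS⟩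
            · omega
            · simp only [Set.mem_union, Set.mem_insert_iff, Set.mem_singleton_iff,
                not_or]
              exact ⟨hnS, by omega, by omega⟩
          · exact absurd huic hni
        · have := hreg hki hnm i (by omega) (by omega) (by omega) (by omega)
          rcases this with h | h <;>
            simp only [Set.mem_union, Set.mem_insert_iff, Set.mem_singleton_iff,
              not_or] at h ⊢
          · left
            obtain ⟨hS, _, _⟩ := h
            exact ⟨hS, by omega, by omega⟩
          · right
            rw [hpsii] at h ⊢
            obtain ⟨hS, _, hvm⟩ := h
            refine ⟨hS, by omega, fun hes => ?_⟩
            rcases hsS with h' | h'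
            · omega
            · exact hS (by rw [hes]; exact h')
  refine ⟨hiff, fun hbt => hiff.mpr ?_⟩
  rw [hpsit]
  by_cases hin : 2 * n - t ∈ Set.Icc t s
  · left
    by_cases hds : 1 + t ≤ n ∧ n < s
    · have hin' := hin
      simp only [Set.mem_Icc] at hin'
      refine hdeep hds.1 hds.2 hin'.2 ?_
      rcases hbt with hb | hb
      · rcases hb with h | ⟨_, _, h⟩
        · omega
        · exact Or.inl h
      · exact Or.inr hb
    · exact hvac hin hds
  · exact Or.inr hin

end Kh
end

section
/- Let n ≥ 1, 1 ≤ k ≤ m ≤ 2n, 1 ≤ i ≤ j ≤ 2n, S ⊆ [k,m), T ⊆ [i,j). Then: (1) the ST-scheme is balanced if and only if the S*T*-scheme is balanced; (2) the ST*-scheme is balanced if and only if the S*T-scheme is balanced; (3) the pair (S,k,m), (T,i,j) has form (★) if and only if the pair (S*,ψ(m),ψ(k)), (T*,ψ(j),ψ(i)) has form (★); (4) the pair (S,k,m), (T*,ψ(j),ψ(i)) has form (★) if and only if the pair (S*,ψ(m),ψ(k)), (T,i,j) has form (★). -/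
namespace Kh

lemma mem_star_iff (n k m : ℕ) (hk : 1 ≤ k) (hm : m ≤ 2*n) (S : Set ℕ)
    (hS : S ⊆ Set.Ico k m) (b : ℕ) (hb1 : psi n m ≤ b) (hb2 : b < psi n k) :
    b ∈ starSet n S k m ↔ 2*n - b ∉ S := by
  simp only [starSet, Set.mem_diff, Set.mem_Ico, Set.mem_image]
  constructor
  · rintro ⟨-, h⟩ hmem
    have hb := hS hmem
    simp only [Set.mem_Ico] at hb
    simp only [psi] at hb1 hb2
    exact h ⟨2*n - b, hmem, by simp only [psi]; omega⟩
  · intro h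
    refine ⟨⟨hb1, hb2⟩, ?_⟩
    rintro ⟨s, hs, hsb⟩
    have hb := hS hs
    simp only [Set.mem_Ico] at hb
    simp only [psi] at hsb hb1 hb2
    have : 2*n - b = s := by omega
    rw [this] at h
    exact h hs

lemma white_iff_black (n k m : ℕ) (hk : 1 ≤ k) (hkm : k ≤ m) (hm : m ≤ 2*n)
    (S : Set ℕ) (hS : S ⊆ Set.Ico k m) (a : ℕ) (ha : a ≤ 2*n) :
    whiteLabel S k m a ↔
      blackLabel (starSet n S k m) (psi n m) (psi n k) (2*n - a) := by
  unfold whiteLabel blackLabel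
  constructor
  · rintro (rfl | ⟨h1, h2, h3⟩)
    · left; simp only [psi]; omega
    · right
      have hb1 : psi n m ≤ 2*n - a := by simp only [psi]; omega
      have hb2 : 2*n - a < psi n k := by simp only [psi]; omega
      refine ⟨hb1, hb2, (mem_star_iff n k m hk hm S hS _ hb1 hb2).mpr ?_⟩
      have : 2*n - (2*n - a) = a := by omega
      rw [this]; exact h3
  · rintro (heq | ⟨h1, h2, h3⟩)
    · left; simp only [psi] at heq; omega
    · right
      have h3' := (mem_star_iff n k m hk hm S hS _ h1 h2).mp h3
      simp only [psi] at h1 h2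
      have : 2*n - (2*n - a) = a := by omega
      rw [this] at h3'
      exact ⟨by omega, by omega, h3'⟩

lemma black_iff_white (n k m : ℕ) (hk : 1 ≤ k) (hkm : k ≤ m) (hm : m ≤ 2*n)
    (S : Set ℕ) (hS : S ⊆ Set.Ico k m) (a : ℕ) (ha : a ≤ 2*n) :
    blackLabel S k m a ↔
      whiteLabel (starSet n S k m) (psi n m) (psi n k) (2*n - a) := by
  unfold whiteLabel blackLabel
  constructor
  · rintro (rfl | ⟨h1, h2, h3⟩)
    · left; simp only [psi]; omega
    · right
      have hb1 : psi n m ≤ 2*n - a := by simp only [psi]; omega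
      have hb2 : 2*n - a < psi n k := by simp only [psi]; omega
      refine ⟨hb1, hb2, ?_⟩
      rw [mem_star_iff n k m hk hm S hS _ hb1 hb2]
      intro hcon
      have : 2*n - (2*n - a) = a := by omega
      rw [this] at hcon
      exact hcon h3
  · rintro (heq | ⟨h1, h2, h3⟩)
    · left; simp only [psi] at heq; omega
    · right
      rw [mem_star_iff n k m hk hm S hS _ h1 h2] at h3
      simp only [psi] at h1 h2
      have heq : 2*n - (2*n - a) = a := by omega
      rw [not_not, heq] at h3
      exact ⟨by omega, by omega, h3⟩

lemma black_le (S : Set ℕ) (k m a : ℕ) (h : blackLabel S k m a) : a ≤ m := by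
  rcases h with rfl | ⟨_, h, _⟩ <;> omega

lemma psi_le (n k : ℕ) (hk : 1 ≤ k) (hk2 : k ≤ 2*n) : psi n k ≤ 2*n := by
  simp only [psi]; omega

lemma balanced_star (n k m i j : ℕ) (hk : 1 ≤ k) (hkm : k ≤ m)
    (hm : m ≤ 2 * n) (hi : 1 ≤ i) (hij : i ≤ j) (hj : j ≤ 2 * n)
    (S T : Set ℕ) (hS : S ⊆ Set.Ico k m) (hT : T ⊆ Set.Ico i j) :
    balanced S k m T i j ↔
      balanced (starSet n S k m) (psi n m) (psi n k)
        (starSet n T i j) (psi n j) (psi n i) := by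
  unfold balanced
  constructor
  · intro hbal
    rintro ⟨t', s', hlt, w1, w2, b1, b2⟩
    have hs' : s' ≤ 2*n := le_trans (black_le _ _ _ _ b1) (psi_le n k hk (by omega))
    have ht' : t' ≤ 2*n := by omega
    refine hbal ⟨2*n - s', 2*n - t', by omega, ?_, ?_, ?_, ?_⟩
    · rw [white_iff_black n k m hk hkm hm S hS _ (by omega)]
      have : 2*n - (2*n - s') = s' := by omega
      rw [this]; exact b1
    · rw [white_iff_black n i j hi hij hj T hT _ (by omega)]
      have : 2*n - (2*n - s') = s' := by omega
      rw [this]; exact b2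
    · rw [black_iff_white n k m hk hkm hm S hS _ (by omega)]
      have : 2*n - (2*n - t') = t' := by omega
      rw [this]; exact w1
    · rw [black_iff_white n i j hi hij hj T hT _ (by omega)]
      have : 2*n - (2*n - t') = t' := by omega
      rw [this]; exact w2
  · intro hbal
    rintro ⟨t, s, hlt, w1, w2, b1, b2⟩
    have hs : s ≤ 2*n := le_trans (black_le _ _ _ _ b1) hm
    have ht : t ≤ 2*n := by omega
    refine hbal ⟨2*n - s, 2*n - t, by omega, ?_, ?_, ?_, ?_⟩
    · rw [← black_iff_white n k m hk hkm hm S hS _ hs]; exact b1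
    · rw [← black_iff_white n i j hi hij hj T hT _ hs]; exact b2
    · rw [← white_iff_black n k m hk hkm hm S hS _ ht]; exact w1
    · rw [← white_iff_black n i j hi hij hj T hT _ ht]; exact w2

lemma formStar_star (n k m i j : ℕ) (hk : 1 ≤ k) (hkm : k ≤ m)
    (hm : m ≤ 2 * n) (hi : 1 ≤ i) (hij : i ≤ j) (hj : j ≤ 2 * n)
    (S T : Set ℕ) (hS : S ⊆ Set.Ico k m) (hT : T ⊆ Set.Ico i j) :
    formStar S k m T i j ↔
      formStar (starSet n S k m) (psi n m) (psi n k)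
        (starSet n T i j) (psi n j) (psi n i) := by
  unfold formStar
  constructor
  · rintro ⟨rfl, rfl, hx⟩
    refine ⟨rfl, rfl, fun b hb1 hb2 => ?_⟩
    rw [mem_star_iff n k m hk hm S hS b hb1 hb2,
        mem_star_iff n k m hk hm T hT b hb1 hb2]
    simp only [psi] at hb1 hb2
    have h := hx (2*n - b) (by omega) (by omega)
    unfold Xor' at h ⊢
    unfold Xor at h ⊢
    tauto
  · rintro ⟨h1, h2, hx⟩
    simp only [psi] at h1 h2
    have hki : k = i := by omega
    have hmj : m = j := by omega
    subst hki; subst hmj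
    refine ⟨rfl, rfl, fun a ha1 ha2 => ?_⟩
    have hb1 : psi n m ≤ 2*n - a := by simp only [psi]; omega
    have hb2 : 2*n - a < psi n k := by simp only [psi]; omega
    have h := hx (2*n - a) hb1 hb2
    rw [mem_star_iff n k m hk hm S hS _ hb1 hb2,
        mem_star_iff n k m hk hm T hT _ hb1 hb2] at h
    have heq : 2*n - (2*n - a) = a := by omega
    rw [heq] at h
    unfold Xor' at h ⊢
    unfold Xor at h ⊢
    tauto

lemma psi_psi (n a : ℕ) (h1 : 1 ≤ a) (h2 : a ≤ 2*n) : psi n (psi n a) = a := by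
  simp only [psi]; omega

lemma star_subset (n : ℕ) (S : Set ℕ) (k m : ℕ) :
    starSet n S k m ⊆ Set.Ico (psi n m) (psi n k) :=
  Set.diff_subset

lemma star_star (n k m : ℕ) (hk : 1 ≤ k) (hkm : k ≤ m) (hm : m ≤ 2*n)
    (S : Set ℕ) (hS : S ⊆ Set.Ico k m) :
    starSet n (starSet n S k m) (psi n m) (psi n k) = S := by
  ext b
  constructor
  · intro hb
    have hbr := star_subset n (starSet n S k m) (psi n m) (psi n k) hb
    rw [Set.mem_Ico, psi_psi n k hk (by omega), psi_psi n m (by omega) hm] at hbr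
    have hc1 : psi n m ≤ 2*n - b := by simp only [psi]; omega
    have hc2 : 2*n - b < psi n k := by simp only [psi]; omega
    rw [mem_star_iff n (psi n m) (psi n k) (by simp only [psi]; omega)
        (psi_le n k hk (by omega)) (starSet n S k m) (star_subset n S k m) b
        (by rw [psi_psi n k hk (by omega)]; omega)
        (by rw [psi_psi n m (by omega) hm]; omega),
      mem_star_iff n k m hk hm S hS _ hc1 hc2, not_not] at hb
    have heq : 2*n - (2*n - b) = b := by omega
    rwa [heq] at hb
  · intro hb
    have hbr := hS hb
    rw [Set.mem_Ico] at hbr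
    have hc1 : psi n m ≤ 2*n - b := by simp only [psi]; omega
    have hc2 : 2*n - b < psi n k := by simp only [psi]; omega
    rw [mem_star_iff n (psi n m) (psi n k) (by simp only [psi]; omega)
        (psi_le n k hk (by omega)) (starSet n S k m) (star_subset n S k m) b
        (by rw [psi_psi n k hk (by omega)]; omega)
        (by rw [psi_psi n m (by omega) hm]; omega),
      mem_star_iff n k m hk hm S hS _ hc1 hc2, not_not]
    have heq : 2*n - (2*n - b) = b := by omega
    rwa [heq]

/-- Lemma `bal2`. The `ST`-scheme is balanced iff the `S*T*`-scheme
is balanced; the `ST*`-scheme is balanced iff the `S*T`-scheme is balanced; and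
similarly for form (★). -/
theorem stmt12 (n k m i j : ℕ) (hn : 1 ≤ n) (hk : 1 ≤ k) (hkm : k ≤ m)
    (hm : m ≤ 2 * n) (hi : 1 ≤ i) (hij : i ≤ j) (hj : j ≤ 2 * n)
    (S T : Set ℕ) (hS : S ⊆ Set.Ico k m) (hT : T ⊆ Set.Ico i j) :
    (balanced S k m T i j ↔
      balanced (starSet n S k m) (psi n m) (psi n k)
        (starSet n T i j) (psi n j) (psi n i)) ∧
    (balanced S k m (starSet n T i j) (psi n j) (psi n i) ↔
      balanced (starSet n S k m) (psi n m) (psi n k) T i j) ∧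
    (formStar S k m T i j ↔
      formStar (starSet n S k m) (psi n m) (psi n k)
        (starSet n T i j) (psi n j) (psi n i)) ∧
    (formStar S k m (starSet n T i j) (psi n j) (psi n i) ↔
      formStar (starSet n S k m) (psi n m) (psi n k) T i j) := by
  have hT' : starSet n T i j ⊆ Set.Ico (psi n j) (psi n i) := star_subset n T i j
  have h1j : 1 ≤ psi n j := by simp only [psi]; omega
  have hji : psi n j ≤ psi n i := by simp only [psi]; omega
  have hi2 : psi n i ≤ 2*n := psi_le n i hi (by omega)
  refine ⟨balanced_star n k m i j hk hkm hm hi hij hj S T hS hT, ?_, ?_, ?_⟩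
  · have h := balanced_star n k m (psi n j) (psi n i) hk hkm hm h1j hji hi2
      S (starSet n T i j) hS hT'
    rwa [star_star n i j hi hij hj T hT, psi_psi n i hi (by omega),
      psi_psi n j (by omega) hj] at h
  · exact formStar_star n k m i j hk hkm hm hi hij hj S T hS hT
  · have h := formStar_star n k m (psi n j) (psi n i) hk hkm hm h1j hji hi2
      S (starSet n T i j) hS hT'
    rwa [star_star n i j hi hij hj T hT, psi_psi n i hi (by omega),
      psi_psi n j (by omega) hj] at h

end Kh
end
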